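/- arXiv:2402.01526 — 2 statements merged into one kernel-verified Lean document; each statement's English description precedes it below -/
import Mathlib

section
/- Let x_0, ..., x_r > 0 and suppose that for every i one has |x_i/x_0 − 1| ≤ δ for some 0 ≤ δ < 1. Then the global average weight ω = (r+1)² / ((∑ x_i)(∑ 1/x_i)) satisfies ω ≥ 1 − C δ² for a constant C depending only on r and an upper bound on 1/(1−δ) (e.g., one may take ω ≥ 1 − (r+1)² δ²/(1−δ)). -/
theorem pair_bound (a p q δ : ℝ) (ha : 0 < a) (hδ0 : 0 ≤ δ) (hδ1 : δ < 1)
    (hp1 : (1-δ)*a ≤ p) (hp2 : p ≤ (1+δ)*a)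
    (hq1 : (1-δ)*a ≤ q) (hq2 : q ≤ (1+δ)*a)
    (hp : 0 < p) (hq : 0 < q) :
    p/q + q/p ≤ 2 + 4*δ^2/(1-δ^2) := by
  have h1d : (0:ℝ) < 1 - δ := by linarith
  have h1d' : (0:ℝ) < 1 + δ := by linarith
  set m : ℝ := (1+δ)/(1-δ) with hm_def
  set m' : ℝ := (1-δ)/(1+δ) with hm'_def
  have hm : 0 < m := by positivity
  have hmm' : m * m' = 1 := by rw [hm_def, hm'_def]; field_simp
  have hs : p/q ≤ m := by
    rw [hm_def, div_le_div_iff₀ hq h1d]; nlinarith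
  have ht : q/p ≤ m := by
    rw [hm_def, div_le_div_iff₀ hp h1d]; nlinarith
  have hprod : (p/q) * (q/p) = 1 := by field_simp
  have key : 0 ≤ (m - p/q) * (m - q/p) :=
    mul_nonneg (by linarith) (by linarith)
  have hM : m + m' = 2 + 4*δ^2/(1-δ^2) := by
    have h2 : (1:ℝ) - δ^2 ≠ 0 := by nlinarith
    rw [hm_def, hm'_def]; field_simp; ring
  rw [← hM]
  nlinarith [key, hprod, hmm', hm]

theorem global_average_weight_near_one (r : ℕ) (x : Fin (r + 1) → ℝ)
    (hx : ∀ i, 0 < x i) (δ : ℝ) (hδ0 : 0 ≤ δ) (hδ1 : δ < 1)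
    (hrel : ∀ i, |x i / x 0 - 1| ≤ δ) :
    1 - ((r : ℝ) + 1) ^ 2 * δ ^ 2 / (1 - δ) ≤
      ((r : ℝ) + 1) ^ 2 / ((∑ i, x i) * (∑ i, (x i)⁻¹)) := by
  have h1d : (0:ℝ) < 1 - δ := by linarith
  have ha : 0 < x 0 := hx 0
  -- bounds on each x i
  have hbd : ∀ i, (1-δ) * x 0 ≤ x i ∧ x i ≤ (1+δ) * x 0 := by
    intro i
    have h := abs_le.1 (hrel i)
    constructor
    · have : 1 - δ ≤ x i / x 0 := by linarith [h.1]
      calc (1-δ) * x 0 ≤ (x i / x 0) * x 0 := by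
            exact mul_le_mul_of_nonneg_right this ha.le
        _ = x i := by field_simp
    · have : x i / x 0 ≤ 1 + δ := by linarith [h.2]
      calc x i = (x i / x 0) * x 0 := by field_simp
        _ ≤ (1+δ) * x 0 := mul_le_mul_of_nonneg_right this ha.le
  rcases Nat.eq_zero_or_pos r with hr | hr
  · subst hr
    have hx0 : x 0 * (x 0)⁻¹ = 1 := mul_inv_cancel₀ ha.ne'
    have e1 : (∑ i, x i) = x 0 := by simp [Fin.sum_univ_succ]
    have e2 : (∑ i, (x i)⁻¹) = (x 0)⁻¹ := by simp [Fin.sum_univ_succ]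
    rw [e1, e2, hx0]
    have hpos : 0 ≤ δ^2 / (1-δ) := by positivity
    norm_num
    linarith
  · -- main case r ≥ 1
    set N : ℝ := (r : ℝ) + 1 with hN_def
    have hN2 : 2 ≤ N := by
      have : (1:ℝ) ≤ (r:ℝ) := by exact_mod_cast hr
      simp [hN_def]; linarith
    have hNpos : 0 < N := by linarith
    have hSpos : 0 < (∑ i, x i) * (∑ i, (x i)⁻¹) := by
      apply mul_pos <;> apply Finset.sum_pos <;>
        first
        | exact fun i _ => hx i
        | exact fun i _ => inv_pos.2 (hx i)
        | exact Finset.univ_nonempty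
    set S : ℝ := (∑ i, x i) * (∑ i, (x i)⁻¹) with hS_def
    -- expand S as double sum
    have hexp : S = ∑ i, ∑ j, x i * (x j)⁻¹ := Finset.sum_mul_sum _ _ _ _
    have hswap : (∑ i, ∑ j, x i * (x j)⁻¹) = ∑ i, ∑ j, x j * (x i)⁻¹ := by
      rw [Finset.sum_comm]
    have h2S : 2 * S = ∑ i, ∑ j, (x i / x j + x j / x i) := by
      have : (∑ i, ∑ j, (x i / x j + x j / x i))
          = (∑ i, ∑ j, x i * (x j)⁻¹) + (∑ i, ∑ j, x j * (x i)⁻¹) := by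
        simp only [div_eq_mul_inv, ← Finset.sum_add_distrib]
      rw [this, ← hswap, ← hexp]; ring
    have hu0 : 0 ≤ 2*δ^2/(1-δ^2) := by
      have : (0:ℝ) < 1 - δ^2 := by nlinarith
      positivity
    have hSle : S ≤ N^2 * (1 + 2*δ^2/(1-δ^2)) := by
      have hterm : (∑ i, ∑ j, (x i / x j + x j / x i))
          ≤ ∑ (_ : Fin (r+1)), ∑ (_ : Fin (r+1)), (2 + 4*δ^2/(1-δ^2)) := by
        refine Finset.sum_le_sum fun i _ => Finset.sum_le_sum fun j _ => ?_
        exact pair_bound (x 0) (x i) (x j) δ ha hδ0 hδ1 (hbd i).1 (hbd i).2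
          (hbd j).1 (hbd j).2 (hx i) (hx j)
      have hconst : (∑ (_ : Fin (r+1)), ∑ (_ : Fin (r+1)), (2 + 4*δ^2/(1-δ^2)))
          = N^2 * (2 + 4*δ^2/(1-δ^2)) := by
        simp [Finset.sum_const, Finset.card_univ, hN_def]
        push_cast
        ring
      rw [hconst] at hterm
      rw [← h2S] at hterm
      have hring : N^2 * (2 + 4*δ^2/(1-δ^2)) = 2 * (N^2 * (1 + 2*δ^2/(1-δ^2))) := by ring
      linarith
    set t : ℝ := N^2 * δ^2 / (1-δ) with ht_def
    set u : ℝ := 2*δ^2/(1-δ^2) with hu_def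
    by_cases hcase : 1 - t ≤ 0
    · have : 0 < N^2 / S := by positivity
      linarith
    · push_neg at hcase
      have h0t : 0 ≤ 1 - t := by linarith
      have hut : u ≤ t := by
        rw [hu_def, ht_def, div_le_div_iff₀ (by nlinarith) h1d]
        have h4 : (0:ℝ) ≤ N^2*(1+δ) - 2 := by nlinarith
        nlinarith [mul_nonneg (mul_nonneg (sq_nonneg δ) h1d.le) h4]
      have ht0 : 0 ≤ t := by positivity
      rw [le_div_iff₀ hSpos]
      have h1 : (1-t) * S ≤ (1-t) * (N^2 * (1+u)) :=
        mul_le_mul_of_nonneg_left hSle h0t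
      have h2 : (1-t) * (1+u) ≤ 1 := by nlinarith [mul_nonneg ht0 hu0]
      calc (1-t) * S ≤ (1-t) * (N^2 * (1+u)) := h1
        _ = N^2 * ((1-t) * (1+u)) := by ring
        _ ≤ N^2 * 1 := by
            exact mul_le_mul_of_nonneg_left h2 (by positivity)
        _ = N^2 := by ring
end

section
/- For any degree-4 polynomial f over ℝ, any h > 0, any x_j ∈ ℝ and any τ ∈ ℝ, if f_{j+l} = (1/h)∫ from x_j+(l−1/2)h to x_j+(l+1/2)h of f for l = −2,...,2, then ((9+200τ−120τ²−160τ³+80τ⁴)/1920)f_{j−2} + ((−29−340τ+360τ²+80τ³−80τ⁴)/480)f_{j−1} + ((1067−1320τ²+240τ⁴)/960)f_j + ((−29+340τ+360τ²−80τ³−80τ⁴)/480)f_{j+1} + ((9−200τ−120τ²+160τ³+80τ⁴)/1920)f_{j+2} = f(x_j + τh). -/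
open intervalIntegral in
set_option maxHeartbeats 2000000 in
theorem full_five_cell_reconstruction_exact (f : Polynomial ℝ)
    (hf : f.degree ≤ 4) (h : ℝ) (hh : 0 < h) (xj τ : ℝ) :
    ((9 + 200*τ - 120*τ^2 - 160*τ^3 + 80*τ^4)/1920) *
        ((1/h) * ∫ x in (xj + (-2 - 1/2)*h)..(xj + (-2 + 1/2)*h), f.eval x)
      + ((-29 - 340*τ + 360*τ^2 + 80*τ^3 - 80*τ^4)/480) *
        ((1/h) * ∫ x in (xj + (-1 - 1/2)*h)..(xj + (-1 + 1/2)*h), f.eval x)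
      + ((1067 - 1320*τ^2 + 240*τ^4)/960) *
        ((1/h) * ∫ x in (xj + (0 - 1/2)*h)..(xj + (0 + 1/2)*h), f.eval x)
      + ((-29 + 340*τ + 360*τ^2 - 80*τ^3 - 80*τ^4)/480) *
        ((1/h) * ∫ x in (xj + (1 - 1/2)*h)..(xj + (1 + 1/2)*h), f.eval x)
      + ((9 - 200*τ - 120*τ^2 + 160*τ^3 + 80*τ^4)/1920) *
        ((1/h) * ∫ x in (xj + (2 - 1/2)*h)..(xj + (2 + 1/2)*h), f.eval x)
      = f.eval (xj + τ * h) := by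
  set c0 := f.coeff 0
  set c1 := f.coeff 1
  set c2 := f.coeff 2
  set c3 := f.coeff 3
  set c4 := f.coeff 4
  have hdeg : f.natDegree < 5 := by
    exact Nat.lt_succ_of_le (Polynomial.natDegree_le_iff_degree_le.mpr hf)
  have hev : ∀ x : ℝ, f.eval x = c0 + c1*x + c2*x^2 + c3*x^3 + c4*x^4 := by
    intro x
    rw [Polynomial.eval_eq_sum_range' hdeg]
    simp [Finset.sum_range_succ]
    rfl
  have key : ∀ a b : ℝ, (∫ x in a..b, f.eval x) =
      (c0*b + c1*b^2/2 + c2*b^3/3 + c3*b^4/4 + c4*b^5/5)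
      - (c0*a + c1*a^2/2 + c2*a^3/3 + c3*a^4/4 + c4*a^5/5) := by
    intro a b
    have := intervalIntegral.integral_eq_sub_of_hasDerivAt
      (f := fun x : ℝ => c0*x + c1*x^2/2 + c2*x^3/3 + c3*x^4/4 + c4*x^5/5)
      (f' := fun x => f.eval x) (a := a) (b := b)
      (fun x _ => by
        simp only [hev]
        have h1 : HasDerivAt (fun x : ℝ => c0*x + c1*x^2/2 + c2*x^3/3 + c3*x^4/4 + c4*x^5/5)
            (c0*1 + c1*(2*x^1)/2 + c2*(3*x^2)/3 + c3*(4*x^3)/4 + c4*(5*x^4)/5) x := by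
          exact ((((((hasDerivAt_id x).const_mul c0).add
            (((hasDerivAt_pow 2 x).const_mul c1).div_const 2)).add
            (((hasDerivAt_pow 3 x).const_mul c2).div_const 3)).add
            (((hasDerivAt_pow 4 x).const_mul c3).div_const 4)).add
            (((hasDerivAt_pow 5 x).const_mul c4).div_const 5))
        refine h1.congr_deriv ?_
        ring)
      ((f.continuous_aeval.intervalIntegrable a b))
    simpa using this
  rw [key, key, key, key, key, hev]
  have hh' : h ≠ 0 := ne_of_gt hh
  field_simp
  ring
end
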